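/- For r, s ≥ 1, the value of the Nekrasov factor N_{(r^s),∅}(Q^{-1}) at Q = q^r t^{-s} equals ∏_{-r ≤ i ≤ -1, -s ≤ j ≤ -1} (1 - q^i t^{-j}). -/

import Mathlib

open Finset Filter

/-- Length of column `j+1` of the Young diagram of `p` (rows 0-indexed). -/
noncomputable def conjP (p : ℕ → ℕ) (j : ℕ) : ℕ := Nat.card {i : ℕ | j < p i}

/-- The Nekrasov factor `N_{λ,μ}(Q)`; rows are 0-indexed, so `l i` is the
`(i+1)`-st row of `λ`.  It equals
`∏_{(i,j)∈μ} (1 - Q q^{λ_i - j} t^{μ'_j - i + 1}) ·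
 ∏_{(i,j)∈λ} (1 - Q q^{-μ_i + j - 1} t^{-λ'_j + i})` (1-indexed boxes). -/
noncomputable def Nfac (q t Q : ℂ) (l m : ℕ → ℕ) : ℂ :=
  (∏ᶠ i : ℕ, ∏ j ∈ Finset.range (m i),
    (1 - Q * q ^ ((l i : ℤ) - ((j : ℤ) + 1)) * t ^ ((conjP m j : ℤ) - (i : ℤ)))) *
  (∏ᶠ i : ℕ, ∏ j ∈ Finset.range (l i),
    (1 - Q * q ^ (-(m i : ℤ) + (j : ℤ)) * t ^ (-(conjP l j : ℤ) + (i : ℤ) + 1)))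

/-- The Nekrasov summand
`Z_{λ,μ}(Q,q,t) = 1/(N_{λ,λ}(1) N_{μ,μ}(1) N_{λ,μ}(Q) N_{μ,λ}(Q⁻¹))`. -/
noncomputable def Zlm (q t Q : ℂ) (l m : ℕ → ℕ) : ℂ :=
  1 / (Nfac q t 1 l l * Nfac q t 1 m m * Nfac q t Q l m * Nfac q t Q⁻¹ m l)

/-- `p : ℕ → ℕ` is a partition: antitone with finite support. -/
def IsPartition (p : ℕ → ℕ) : Prop :=
  (∀ i j : ℕ, i ≤ j → p j ≤ p i) ∧ {i | p i ≠ 0}.Finite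

/-- The rectangular partition `(r^s)`: `s` rows of length `r`. -/
def rect (r s : ℕ) : ℕ → ℕ := fun i => if i < s then r else 0

/-- The single-box partition `(1)`. -/
def oneBox : ℕ → ℕ := fun i => if i = 0 then 1 else 0

/-- The empty partition. -/
def emptyP : ℕ → ℕ := fun _ => 0

/-- `G(r,s;q,t) = -sgn(r) q^r t^{-s}
∏_{-|r| ≤ i ≤ |r|-1, -|s| ≤ j ≤ |s|-1, (i,j)≠(0,0)} (1 - q^i t^{-j})^{-1}`. -/
noncomputable def Gfun (q t : ℂ) (r s : ℤ) : ℂ :=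
  -(if 0 < r then (1 : ℂ) else -1) * q ^ r * t ^ (-s) *
    ∏ i ∈ Finset.Icc (-|r|) (|r| - 1), ∏ j ∈ Finset.Icc (-|s|) (|s| - 1),
      (if i = 0 ∧ j = 0 then 1 else (1 - q ^ i * t ^ (-j))⁻¹)


lemma conjP_rect' (r s j : ℕ) (hj : j < r) :
    (Nat.card {i : ℕ | j < (if i < s then r else 0)}) = s := by
  have : {i : ℕ | j < (if i < s then r else 0)} = Set.Iio s := by
    ext i; by_cases h : i < s <;> simp [h, hj]
  rw [this]; simp

lemma reindex1 (f : ℤ → ℂ) (n : ℕ) :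
    ∏ i ∈ Finset.Icc (-(n:ℤ)) (-1), f i = ∏ k ∈ Finset.range n, f ((k:ℤ) - n) := by
  refine Finset.prod_nbij' (fun i => (i + (n:ℤ)).toNat) (fun k => (k:ℤ) - n) ?_ ?_ ?_ ?_ ?_
  · intro i hi; simp only [mem_Icc] at hi; simp only [mem_range]; omega
  · intro k hk; simp only [mem_range] at hk; simp only [mem_Icc]; omega
  · intro i hi; simp only [mem_Icc] at hi; omega
  · intro k hk; simp only [mem_range] at hk; omega
  · intro i hi; simp only [mem_Icc] at hi; congr 1; omega

lemma reindex2 (f : ℤ → ℂ) (n : ℕ) :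
    ∏ i ∈ Finset.Icc (-(n:ℤ)) (-1), f i = ∏ k ∈ Finset.range n, f (-(k:ℤ) - 1) := by
  refine Finset.prod_nbij' (fun i => (-i - 1).toNat) (fun k => -(k:ℤ) - 1) ?_ ?_ ?_ ?_ ?_
  · intro i hi; simp only [mem_Icc] at hi; simp only [mem_range]; omega
  · intro k hk; simp only [mem_range] at hk; simp only [mem_Icc]; omega
  · intro i hi; simp only [mem_Icc] at hi; omega
  · intro k hk; simp only [mem_range] at hk; omega
  · intro i hi; simp only [mem_Icc] at hi; congr 1; omega

/-- The value of `N_{(r^s),∅}(Q⁻¹)` at `Q = q^r t^{-s}` equals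
`∏_{-r≤i≤-1, -s≤j≤-1} (1 - q^i t^{-j})`. -/
theorem stmt_4 (q t : ℂ) (hq : q ≠ 0) (ht : t ≠ 0) (r s : ℕ)
    (hr : 1 ≤ r) (hs : 1 ≤ s) :
    Nfac q t ((q ^ (r : ℤ) * t ^ (-(s : ℤ)))⁻¹) (rect r s) emptyP
      = ∏ i ∈ Finset.Icc (-(r : ℤ)) (-1), ∏ j ∈ Finset.Icc (-(s : ℤ)) (-1),
          (1 - q ^ i * t ^ (-j)) := by
  have hconj : ∀ j < r, (conjP (rect r s) j : ℤ) = s := by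
    intro j hj
    have := conjP_rect' r s j hj
    simp only [conjP, rect]
    exact_mod_cast this
  rw [Nfac]
  simp only [emptyP, Finset.range_zero, Finset.prod_empty, finprod_one, one_mul,
    Nat.cast_zero, neg_zero, zero_add]
  rw [finprod_eq_prod_of_mulSupport_subset _ (s := Finset.range s)
    (by
      intro i hi
      simp only [Function.mem_mulSupport] at hi
      simp only [Finset.coe_range, Set.mem_Iio]
      by_contra h
      push_neg at h
      apply hi
      simp [rect, Nat.not_lt.mpr h])]
  have hRHS : (∏ i ∈ Finset.Icc (-(r : ℤ)) (-1), ∏ j ∈ Finset.Icc (-(s : ℤ)) (-1),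
          (1 - q ^ i * t ^ (-j)))
      = ∏ k ∈ Finset.range r, ∏ m ∈ Finset.range s,
          (1 - q ^ ((k:ℤ) - r) * t ^ ((m:ℤ) + 1)) := by
    rw [reindex1]
    refine Finset.prod_congr rfl fun k _ => ?_
    rw [reindex2]
    refine Finset.prod_congr rfl fun m _ => ?_
    congr 2
    ring
  rw [hRHS, Finset.prod_comm]
  refine Finset.prod_congr rfl fun i hi => ?_
  simp only [mem_range] at hi
  have : rect r s i = r := by simp [rect, hi]
  rw [this]
  refine Finset.prod_congr rfl fun j hj => ?_
  simp only [mem_range] at hj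
  rw [hconj j hj]
  congr 1
  rw [mul_inv, ← zpow_neg q, ← zpow_neg t, neg_neg]
  have e : q ^ (-(r:ℤ)) * t ^ (s:ℤ) * q ^ (j:ℤ) * t ^ (-(s:ℤ) + (i:ℤ) + 1)
      = (q ^ (-(r:ℤ)) * q ^ (j:ℤ)) * (t ^ (s:ℤ) * t ^ (-(s:ℤ) + (i:ℤ) + 1)) := by ring
  rw [e, ← zpow_add₀ hq, ← zpow_add₀ ht]
  congr 1 <;> [skip; skip] <;> congr 1 <;> ring
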